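/- With the separable group regularizer J and restriction/prolongation operators R, P = Rᵀ as above, suppose θ ∈ dom(∂J), v ∈ ∂J_δ(θ), θ̂ ∈ dom(∂Ĵ), and v̂ ∈ ∂Ĵ_δ(θ̂). Define θ̃ := θ + P(θ̂ - Rθ) and ṽ := v + P(v̂ - Rv). Then ṽ ∈ ∂J_δ(θ̃). -/

import Mathlib

open RealInnerProductSpace Finset

/-- prolongating coarse subgradients. With `θ̃ := θ + P(θ̂ - Rθ)` and
`ṽ := v + P(v̂ - Rv)` built from subgradients `v ∈ ∂J_δ(θ)` and `v̂ ∈ ∂Ĵ_δ(θ̂)`, we have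
`ṽ ∈ ∂J_δ(θ̃)`. -/
theorem prolongated_subgradient {G : Type*} [Fintype G] [DecidableEq G]
    (dg : G → ℕ) (Jg : (g : G) → EuclideanSpace ℝ (Fin (dg g)) → ℝ)
    (hconv : ∀ g, ConvexOn ℝ Set.univ (Jg g)) (hlsc : ∀ g, LowerSemicontinuous (Jg g))
    (δ : ℝ) (hδ : 0 < δ) (S : Finset G) :
    let E := PiLp 2 (fun g : G => EuclideanSpace ℝ (Fin (dg g)))
    let Ec := PiLp 2 (fun g : {g : G // g ∈ S} => EuclideanSpace ℝ (Fin (dg g.1)))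
    let Jδ : E → ℝ := fun x => 1/(2*δ) * ‖x‖^2 + ∑ g, Jg g (x g)
    let Jδc : Ec → ℝ := fun x => 1/(2*δ) * ‖x‖^2 + ∑ g : {g : G // g ∈ S}, Jg g.1 (x g)
    let Rop : E → Ec := fun x => WithLp.toLp 2 (fun g => x g.1)
    let Pop : Ec → E := fun x => WithLp.toLp 2 (fun g => if h : g ∈ S then x ⟨g, h⟩ else 0)
    ∀ (θ v : E) (θc vc : Ec),
      (∀ x : E, Jδ θ + ⟪v, x - θ⟫ ≤ Jδ x) →
      (∀ x : Ec, Jδc θc + ⟪vc, x - θc⟫ ≤ Jδc x) →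
      ∀ x : E, Jδ (θ + Pop (θc - Rop θ)) + ⟪v + Pop (vc - Rop v), x - (θ + Pop (θc - Rop θ))⟫
        ≤ Jδ x := by
  intro E Ec Jδ Jδc Rop Pop θ v θc vc hv hvc x
  classical
  set f : (g : G) → EuclideanSpace ℝ (Fin (dg g)) → ℝ :=
    fun g a => 1/(2*δ) * ‖a‖^2 + Jg g a with hf
  have hJδ : ∀ y : E, Jδ y = ∑ g, f g (y g) := by
    intro y
    simp only [Jδ, hf]
    rw [PiLp.norm_sq_eq_of_L2, Finset.mul_sum, Finset.sum_add_distrib]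
  have hJδc : ∀ y : Ec, Jδc y = ∑ g ∈ S.attach, f g.1 (y g) := by
    intro y
    simp only [Jδc, hf]
    rw [PiLp.norm_sq_eq_of_L2, Finset.mul_sum, ← Finset.sum_add_distrib,
      Finset.univ_eq_attach]
  have h1 := hv (WithLp.toLp 2 (fun g => if g ∈ S then θ g else x g))
  have h2 := hvc (Rop x)
  rw [hJδ, hJδ] at h1
  rw [hJδc, hJδc] at h2
  rw [hJδ, hJδ]
  have hinner : ∀ a b : E, ⟪a, b⟫ = ∑ g, ⟪a g, b g⟫ := fun a b => rfl
  have hinnerc : ∀ a b : Ec, ⟪a, b⟫ = ∑ g ∈ S.attach, ⟪a g, b g⟫ := fun a b => rfl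
  have hsub : ∀ (a b : E) (g : G), (a - b) g = a g - b g := fun _ _ _ => rfl
  have hsubc : ∀ (a b : Ec) (g : {g : G // g ∈ S}), (a - b) g = a g - b g := fun _ _ _ => rfl
  have hadd : ∀ (a b : E) (g : G), (a + b) g = a g + b g := fun _ _ _ => rfl
  rw [hinner] at h1
  rw [hinnerc] at h2
  rw [hinner]
  simp only [hsub] at h1 ⊢
  simp only [hsubc] at h2
  -- split fine sums into S and Sᶜ
  rw [← Finset.sum_add_sum_compl S (fun g => f g (θ g)),
      ← Finset.sum_add_sum_compl S (fun g => f g (if g ∈ S then θ g else x g)),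
      ← Finset.sum_add_sum_compl S
        (fun g => ⟪v g, (if g ∈ S then θ g else x g) - θ g⟫)] at h1
  have e1 : ∑ g ∈ S, f g (if g ∈ S then θ g else x g) = ∑ g ∈ S, f g (θ g) :=
    Finset.sum_congr rfl (fun g hg => by rw [if_pos hg])
  have e2 : ∑ g ∈ S, ⟪v g, (if g ∈ S then θ g else x g) - θ g⟫ = 0 := by
    refine Finset.sum_eq_zero (fun g hg => ?_)
    rw [if_pos hg, sub_self, inner_zero_right]
  have e3 : ∑ g ∈ Sᶜ, f g (if g ∈ S then θ g else x g) = ∑ g ∈ Sᶜ, f g (x g) :=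
    Finset.sum_congr rfl (fun g hg => by rw [if_neg (Finset.mem_compl.mp hg)])
  have e4 : ∑ g ∈ Sᶜ, ⟪v g, (if g ∈ S then θ g else x g) - θ g⟫
      = ∑ g ∈ Sᶜ, ⟪v g, x g - θ g⟫ :=
    Finset.sum_congr rfl (fun g hg => by rw [if_neg (Finset.mem_compl.mp hg)])
  rw [e1, e2, e3, e4] at h1
  -- split goal sums
  rw [← Finset.sum_add_sum_compl S (fun g => f g ((θ + Pop (θc - Rop θ)) g)),
      ← Finset.sum_add_sum_compl S (fun g => f g (x g)),
      ← Finset.sum_add_sum_compl S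
        (fun g => ⟪(v + Pop (vc - Rop v)) g, x g - (θ + Pop (θc - Rop θ)) g⟫),
      ← Finset.sum_attach S (fun g => f g ((θ + Pop (θc - Rop θ)) g)),
      ← Finset.sum_attach S (fun g => f g (x g)),
      ← Finset.sum_attach S
        (fun g => ⟪(v + Pop (vc - Rop v)) g, x g - (θ + Pop (θc - Rop θ)) g⟫)]
  have g1 : ∑ g ∈ S.attach, f g.1 ((θ + Pop (θc - Rop θ)) g.1)
      = ∑ g ∈ S.attach, f g.1 (θc g) := by
    refine Finset.sum_congr rfl (fun g _ => ?_)
    simp only [Pop, Rop, hadd, dif_pos g.2, hsubc]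
    rw [add_sub_cancel]
  have g2 : ∑ g ∈ Sᶜ, f g ((θ + Pop (θc - Rop θ)) g) = ∑ g ∈ Sᶜ, f g (θ g) := by
    refine Finset.sum_congr rfl (fun g hg => ?_)
    simp only [Pop, Rop, hadd, dif_neg (Finset.mem_compl.mp hg), add_zero]
  have g3 : ∑ g ∈ S.attach, ⟪(v + Pop (vc - Rop v)) g.1, x g.1 - (θ + Pop (θc - Rop θ)) g.1⟫
      = ∑ g ∈ S.attach, ⟪vc g, x g.1 - θc g⟫ := by
    refine Finset.sum_congr rfl (fun g _ => ?_)
    simp only [Pop, Rop, hadd, dif_pos g.2, hsubc]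
    rw [add_sub_cancel, add_sub_cancel]
  have g4 : ∑ g ∈ Sᶜ, ⟪(v + Pop (vc - Rop v)) g, x g - (θ + Pop (θc - Rop θ)) g⟫
      = ∑ g ∈ Sᶜ, ⟪v g, x g - θ g⟫ := by
    refine Finset.sum_congr rfl (fun g hg => ?_)
    simp only [Pop, Rop, hadd, dif_neg (Finset.mem_compl.mp hg), add_zero]
  rw [g1, g2, g3, g4]
  have h2' : ∑ g ∈ S.attach, f g.1 (θc g) + ∑ g ∈ S.attach, ⟪vc g, x g.1 - θc g⟫
      ≤ ∑ g ∈ S.attach, f g.1 (x g.1) := h2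
  linarith
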